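/- For every nonempty word ω over ℕ with last letter ω_k: ∫_{J_ω}(x − a(ω))² dP = p_ω · s_ω² · V; moreover ∫_{J_{(ω,∞)}}(x − a(ω,∞))² dP = (43/9)·p_ω·s_ω²·V if ω_k ≥ 2, and ∫_{J_{(ω,∞)}}(x − a(ω,∞))² dP = (43/3)·p_ω·s_ω²·V if ω_k = 1. -/

import Mathlib

open MeasureTheory

noncomputable section

/-- The contractive similarity `S j x = x / 2^(j+1) + 1 - 1/2^(j-1)` (used for `j ≥ 1`). -/
def S (j : ℕ) (x : ℝ) : ℝ := x / 2 ^ (j + 1) + 1 - 1 / 2 ^ (j - 1)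

/-- The similarity ratio `s j = 1/2^(j+1)`. -/
def s (j : ℕ) : ℝ := 1 / 2 ^ (j + 1)

/-- The probability vector: `p 1 = 1/4`, `p j = 3/2^(j+1)` for `j ≥ 2`. -/
def p (j : ℕ) : ℝ := if j = 1 then 1 / 4 else 3 / 2 ^ (j + 1)

/-- `Sw ω = S_{ω_1} ∘ ⋯ ∘ S_{ω_k}`. -/
def Sw (ω : List ℕ) : ℝ → ℝ := ω.foldr (fun j f => S j ∘ f) id

/-- `pw ω = p_{ω_1} ⋯ p_{ω_k}`. -/
def pw (ω : List ℕ) : ℝ := (ω.map p).prod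

/-- `sw ω = s_{ω_1} ⋯ s_{ω_k}`. -/
def sw (ω : List ℕ) : ℝ := (ω.map s).prod

/-- The basic interval `J_ω = S_ω([0,1])`. -/
def Jw (ω : List ℕ) : Set ℝ := Sw ω '' Set.Icc 0 1

/-- The last letter of a word (junk value `0` for the empty word). -/
def wlast (ω : List ℕ) : ℕ := ω.getLastD 0

/-- `wext ω j = ω^-(ω_k + j)`: the word `ω` with its last letter increased by `j`. -/
def wext (ω : List ℕ) (j : ℕ) : List ℕ := ω.dropLast ++ [wlast ω + j]

/-- `J_{(ω,∞)} = ⋃_{j=1}^∞ J_{ω^-(ω_k+j)}`. -/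
def Jinf (ω : List ℕ) : Set ℝ := ⋃ j : ℕ, Jw (wext ω (j + 1))

/-- `a(ω) = S_ω(4/7)`. -/
def aw (ω : List ℕ) : ℝ := Sw ω (4 / 7)

/-- `a(ω,∞) = S_{ω^-(ω_k+1)}(4/7) + (8/7) s_{ω^-(ω_k+1)}`. -/
def ainf (ω : List ℕ) : ℝ := Sw (wext ω 1) (4 / 7) + (8 / 7) * sw (wext ω 1)

/-- A (nonempty) word over the alphabet `{1, 2, 3, …}`. -/
def IsWord (ω : List ℕ) : Prop := ω ≠ [] ∧ ∀ i ∈ ω, 1 ≤ i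

/-- The invariance relation `P(A) = ∑_{j=1}^∞ p_j P(S_j⁻¹ A)`. -/
def Invariant (P : Measure ℝ) : Prop :=
  ∀ A : Set ℝ, MeasurableSet A →
    P A = ∑' j : ℕ, ENNReal.ofReal (p (j + 1)) * P (S (j + 1) ⁻¹' A)

/-- The distortion error `∫ min_{a ∈ α} (x-a)² dP` of a set `α ⊆ ℝ`. -/
def distortion (P : Measure ℝ) (α : Set ℝ) : ℝ :=
  ∫ x, (⨅ a : α, (x - (a : ℝ)) ^ 2) ∂P

/-- The `n`-th quantization error for `P`. -/
def quantErr (P : Measure ℝ) (n : ℕ) : ℝ :=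
  sInf {r : ℝ | ∃ α : Set ℝ, 1 ≤ α.ncard ∧ α.ncard ≤ n ∧ r = distortion P α}

/-- `α` is an optimal set of `n`-means for `P`. -/
def IsOptimal (P : Measure ℝ) (n : ℕ) (α : Set ℝ) : Prop :=
  1 ≤ α.ncard ∧ α.ncard ≤ n ∧ distortion P α = quantErr P n

/-- `E(a(ω)) = ∫_{J_ω} (x - a(ω))² dP`. -/
def Ea (P : Measure ℝ) (ω : List ℕ) : ℝ := ∫ x in Jw ω, (x - aw ω) ^ 2 ∂P

/-- `E(a(ω,∞)) = ∫_{J_{(ω,∞)}} (x - a(ω,∞))² dP`. -/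
def Eainf (P : Measure ℝ) (ω : List ℕ) : ℝ := ∫ x in Jinf ω, (x - ainf ω) ^ 2 ∂P

/-- The Voronoi region `M(a|α)`. -/
def voronoi (α : Set ℝ) (a : ℝ) : Set ℝ := {x : ℝ | ∀ b ∈ α, |x - a| ≤ |x - b|}

/-! ### basic facts -/

lemma s_pos (j : ℕ) : 0 < s j := by unfold s; positivity

lemma s_ne (j : ℕ) : s j ≠ 0 := (s_pos j).ne'

lemma p_nonneg (j : ℕ) : 0 ≤ p j := by unfold p; split <;> positivity

lemma p_eq_3s {j : ℕ} (hj : 2 ≤ j) : p j = 3 * s j := by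
  rw [p, if_neg (by omega), s]; ring

lemma S_apply {j : ℕ} (hj : 1 ≤ j) (x : ℝ) : S j x = s j * x + (1 - 4 * s j) := by
  rcases j with _ | n
  · omega
  · have h2 : (0:ℝ) < 2 ^ n := by positivity
    simp only [S, s, Nat.add_sub_cancel]
    have e1 : (2:ℝ) ^ (n + 1 + 1) = 2 ^ n * 4 := by rw [pow_add]; ring
    rw [e1]
    field_simp
    ring

lemma S_sub (j : ℕ) (x y : ℝ) : S j x - S j y = s j * (x - y) := by
  simp only [S, s]; ring

lemma measurable_S (j : ℕ) : Measurable (S j) := by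
  unfold S; fun_prop

lemma S_maps {j : ℕ} (x : ℝ) (hx : x ∈ Set.Icc (0:ℝ) 1) : S j x ∈ Set.Icc (0:ℝ) 1 := by
  obtain ⟨h0, h1⟩ := hx
  rcases j with _ | n
  · simp only [S]; norm_num; constructor <;> linarith
  · have h2 : (0:ℝ) < 2 ^ n := by positivity
    simp only [S, Nat.add_sub_cancel]
    have e1 : (2:ℝ) ^ (n + 1 + 1) = 2 ^ n * 4 := by rw [pow_add]; ring
    rw [e1]
    constructor
    · have : 1 / (2:ℝ) ^ n ≤ 1 := by rw [div_le_one h2]; exact one_le_pow₀ (by norm_num)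
      have : 0 ≤ x / (2 ^ n * 4) := by positivity
      linarith
    · have : x / (2 ^ n * 4) ≤ 1 / 2 ^ n := by
        rw [div_le_div_iff₀ (by positivity) h2]; nlinarith
      linarith

/-! ### word maps -/

lemma Sw_nil (x : ℝ) : Sw [] x = x := rfl
lemma Sw_cons (j : ℕ) (ω : List ℕ) (x : ℝ) : Sw (j :: ω) x = S j (Sw ω x) := rfl
lemma pw_nil : pw [] = 1 := rfl
lemma pw_cons (j : ℕ) (ω : List ℕ) : pw (j :: ω) = p j * pw ω := by simp [pw]
lemma sw_nil : sw [] = 1 := rfl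
lemma sw_cons (j : ℕ) (ω : List ℕ) : sw (j :: ω) = s j * sw ω := by simp [sw]

lemma sw_pos (ω : List ℕ) : 0 < sw ω := by
  induction ω with
  | nil => norm_num [sw_nil]
  | cons j ω ih => rw [sw_cons]; exact mul_pos (s_pos j) ih

lemma sw_ne (ω : List ℕ) : sw ω ≠ 0 := (sw_pos ω).ne'

lemma pw_nonneg (ω : List ℕ) : 0 ≤ pw ω := by
  induction ω with
  | nil => norm_num [pw_nil]
  | cons j ω ih => rw [pw_cons]; exact mul_nonneg (p_nonneg j) ih

lemma Sw_append (u v : List ℕ) (x : ℝ) : Sw (u ++ v) x = Sw u (Sw v x) := by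
  induction u with
  | nil => rfl
  | cons j u ih => simp [Sw_cons, ih]

lemma pw_append (u v : List ℕ) : pw (u ++ v) = pw u * pw v := by
  simp [pw]

lemma sw_append (u v : List ℕ) : sw (u ++ v) = sw u * sw v := by
  simp [sw]

lemma Sw_sub (ω : List ℕ) (x y : ℝ) : Sw ω x - Sw ω y = sw ω * (x - y) := by
  induction ω with
  | nil => simp [Sw_nil, sw_nil]
  | cons j ω ih => rw [Sw_cons, Sw_cons, sw_cons, S_sub, ih]; ring

lemma Sw_inj (ω : List ℕ) : Function.Injective (Sw ω) := by
  intro x y h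
  have := Sw_sub ω x y
  rw [h, sub_self] at this
  have := (mul_eq_zero.mp this.symm).resolve_left (sw_ne ω)
  linarith

lemma Sw_image_Icc (ω : List ℕ) {a b : ℝ} (hab : a ≤ b) :
    Sw ω '' Set.Icc a b = Set.Icc (Sw ω a) (Sw ω b) := by
  ext y
  constructor
  · rintro ⟨x, hx, rfl⟩
    have h1 := Sw_sub ω x a
    have h2 := Sw_sub ω b x
    have hs := sw_pos ω
    constructor <;> nlinarith [hx.1, hx.2]
  · intro hy
    refine ⟨a + (y - Sw ω a) / sw ω, ⟨?_, ?_⟩, ?_⟩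
    · have : 0 ≤ (y - Sw ω a) / sw ω := div_nonneg (by linarith [hy.1]) (sw_pos ω).le
      linarith
    · have h2 := Sw_sub ω b a
      have : (y - Sw ω a) / sw ω ≤ b - a := by
        rw [div_le_iff₀ (sw_pos ω)]
        nlinarith [hy.2]
      linarith
    · have h1 := Sw_sub ω (a + (y - Sw ω a) / sw ω) a
      have h2 : sw ω * ((a + (y - Sw ω a) / sw ω) - a) = y - Sw ω a := by
        have hs := sw_ne ω
        field_simp
        ring
      rw [h2] at h1
      linarith

lemma Jw_eq (ω : List ℕ) : Jw ω = Set.Icc (Sw ω 0) (Sw ω 1) :=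
  Sw_image_Icc ω zero_le_one

lemma Jw_meas (ω : List ℕ) : MeasurableSet (Jw ω) := by
  rw [Jw_eq]; exact measurableSet_Icc

lemma Jw_subset (ω : List ℕ) : Jw ω ⊆ Set.Icc (0:ℝ) 1 := by
  induction ω with
  | nil => rw [Jw]; simp [Sw]
  | cons j ω ih =>
      rw [Jw] at *
      intro y hy
      obtain ⟨x, hx, rfl⟩ := hy
      exact S_maps _ (ih ⟨x, hx, rfl⟩)

lemma s_anti {i j : ℕ} (hij : i < j) : 2 * s j ≤ s i := by
  simp only [s, mul_one_div]
  rw [div_le_div_iff₀ (by positivity) (by positivity)]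
  have h : (2:ℝ) ^ (i + 2) ≤ 2 ^ (j + 1) := pow_le_pow_right₀ (by norm_num) (by omega)
  have e : (2:ℝ) * 2 ^ (i + 1) = 2 ^ (i + 2) := by rw [pow_add, pow_add]; ring
  nlinarith

lemma J_disjoint {i j : ℕ} (hi : 1 ≤ i) (hj : 1 ≤ j) (hij : i ≠ j) :
    Disjoint (S i '' Set.Icc 0 1) (S j '' Set.Icc 0 1) := by
  have key : ∀ {a b : ℕ}, 1 ≤ a → 1 ≤ b → a < b →
      Disjoint (S a '' Set.Icc 0 1) (S b '' Set.Icc 0 1) := by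
    intro a b ha hb hab
    have ia := Sw_image_Icc [a] (zero_le_one (α := ℝ))
    have ib := Sw_image_Icc [b] (zero_le_one (α := ℝ))
    simp only [Sw_cons, Sw_nil] at ia ib
    change Disjoint (Sw [a] '' Set.Icc 0 1) (Sw [b] '' Set.Icc 0 1)
    rw [ia, ib]
    rw [Set.disjoint_left]
    intro x hx hx'
    have hsa := s_anti hab
    have e1 : S a 1 = s a * 1 + (1 - 4 * s a) := S_apply ha 1
    have e2 : S b 0 = s b * 0 + (1 - 4 * s b) := S_apply hb 0
    have h1 := hx.2
    have h2 := hx'.1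
    have := s_pos b
    nlinarith
  rcases lt_or_gt_of_ne hij with h | h
  · exact key hi hj h
  · exact (key hj hi h).symm

/-! ### measure lemmas -/

section PMeas

variable {P : Measure ℝ} [IsProbabilityMeasure P]

lemma ae_mem_unit (hsupp : P (Set.Icc 0 1) = 1) : ∀ᵐ x ∂P, x ∈ Set.Icc (0:ℝ) 1 := by
  rw [ae_iff]
  have h := measure_compl (μ := P) (measurableSet_Icc (a := (0:ℝ)) (b := 1)) (measure_ne_top P _)
  rw [hsupp, measure_univ] at h
  have e : {a : ℝ | ¬a ∈ Set.Icc (0:ℝ) 1} = (Set.Icc (0:ℝ) 1)ᶜ := rfl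
  rw [e, h]
  simp

omit [IsProbabilityMeasure P] in
lemma P_eq_sum (hinv : Invariant P) :
    P = Measure.sum (fun j : ℕ => ENNReal.ofReal (p (j + 1)) • P.map (S (j + 1))) := by
  ext A hA
  rw [Measure.sum_apply _ hA, hinv A hA]
  congr 1
  funext j
  rw [Measure.smul_apply, Measure.map_apply (measurable_S _) hA, smul_eq_mul]

lemma integrable_bdd (hsupp : P (Set.Icc 0 1) = 1) {f : ℝ → ℝ} (hmf : Measurable f)
    {C : ℝ} (h : ∀ x ∈ Set.Icc (0:ℝ) 1, ‖f x‖ ≤ C) : Integrable f P := by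
  refine Integrable.mono' (integrable_const C) hmf.aestronglyMeasurable ?_
  filter_upwards [ae_mem_unit hsupp] with x hx
  exact h x hx

lemma integrable_sq (hsupp : P (Set.Icc 0 1) = 1) (a : ℝ) :
    Integrable (fun x => (x - a) ^ 2) P := by
  refine integrable_bdd hsupp (by fun_prop) (C := (1 + |a|) ^ 2) ?_
  intro x hx
  rw [Real.norm_eq_abs, abs_pow, sq_abs]
  nlinarith [hx.1, hx.2, abs_nonneg a, le_abs_self a, neg_abs_le a]

lemma integrable_lin (hsupp : P (Set.Icc 0 1) = 1) (c b : ℝ) :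
    Integrable (fun x => c * x + b) P := by
  refine integrable_bdd hsupp (by fun_prop) (C := |c| + |b|) ?_
  intro x hx
  have := abs_add_le (c * x) b
  have h1 : |c * x| ≤ |c| := by
    rw [abs_mul]
    nlinarith [abs_nonneg c, abs_nonneg x, abs_le.mpr ⟨by linarith [hx.1], hx.2⟩]
  calc ‖c * x + b‖ = |c * x + b| := rfl
    _ ≤ |c * x| + |b| := abs_add_le _ _
    _ ≤ |c| + |b| := by linarith

omit [IsProbabilityMeasure P] in
lemma transfer (hinv : Invariant P) {f : ℝ → ℝ} (hmf : Measurable f)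
    (hf : Integrable f P) :
    ∫ x, f x ∂P = ∑' j : ℕ, p (j + 1) * ∫ x, f (S (j + 1) x) ∂P := by
  have hQ := P_eq_sum hinv
  have hfQ : Integrable f (Measure.sum (fun j : ℕ => ENNReal.ofReal (p (j + 1)) • P.map (S (j + 1)))) := by
    rw [← hQ]; exact hf
  conv_lhs => rw [hQ]
  rw [integral_sum_measure hfQ]
  congr 1
  funext j
  rw [integral_smul_measure, integral_map (measurable_S _).aemeasurable hmf.aestronglyMeasurable,
    ENNReal.toReal_ofReal (p_nonneg _), smul_eq_mul]

end PMeas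

/-! ### series -/

lemma sum_shift {f : ℕ → ℝ} {c r : ℝ} (h0 : 0 ≤ r) (hr : r < 1)
    (hf : ∀ i, f (i + 1) = c * r ^ i) :
    Summable f ∧ ∑' i, f i = f 0 + c * (1 - r)⁻¹ := by
  have hs : Summable (fun i => f (i + 1)) := by
    have := (summable_geometric_of_lt_one h0 hr).mul_left c
    exact this.congr (fun i => (hf i).symm)
  have hsum : Summable f := (summable_nat_add_iff 1).mp hs
  refine ⟨hsum, ?_⟩
  rw [Summable.tsum_eq_zero_add hsum]
  congr 1
  calc ∑' i, f (i + 1) = ∑' i, c * r ^ i := tsum_congr hf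
    _ = c * (1 - r)⁻¹ := by rw [tsum_mul_left, tsum_geometric_of_lt_one h0 hr]

lemma pow_half (i : ℕ) : ((1:ℝ)/2) ^ i = 1 / 2 ^ i := by rw [div_pow, one_pow]
lemma pow_quarter (i : ℕ) : ((1:ℝ)/4) ^ i = 1 / 4 ^ i := by rw [div_pow, one_pow]
lemma pow_eighth (i : ℕ) : ((1:ℝ)/8) ^ i = 1 / 8 ^ i := by rw [div_pow, one_pow]

lemma two_pow_i (i k : ℕ) : (2:ℝ) ^ (i + k) = 2 ^ i * 2 ^ k := pow_add 2 i k

lemma four_pow (i : ℕ) : (4:ℝ) ^ i = 2 ^ i * 2 ^ i := by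
  rw [← mul_pow]; norm_num

lemma eight_pow (i : ℕ) : (8:ℝ) ^ i = 2 ^ i * 2 ^ i * 2 ^ i := by
  rw [← mul_pow, ← mul_pow]; norm_num

lemma sumP : Summable (fun i : ℕ => p (i + 1)) ∧ ∑' i : ℕ, p (i + 1) = 1 := by
  have h := sum_shift (f := fun i : ℕ => p (i + 1)) (c := 3/8) (r := 1/2)
    (by norm_num) (by norm_num) ?_
  · refine ⟨h.1, ?_⟩
    simp only [p, s] at h ⊢
    rw [h.2]
    norm_num
  · intro i
    have h2 : (2:ℝ) ^ i ≠ 0 := by positivity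
    simp only [p, s]
    rw [if_neg (by omega), pow_half, show i + 1 + 1 + 1 = i + 3 from rfl, two_pow_i i 3]
    field_simp
    ring

lemma sumPS : Summable (fun i : ℕ => p (i + 1) * s (i + 1)) ∧
    ∑' i : ℕ, p (i + 1) * s (i + 1) = 1/8 := by
  have h := sum_shift (f := fun i : ℕ => p (i + 1) * s (i + 1)) (c := 3/64) (r := 1/4)
    (by norm_num) (by norm_num) ?_
  · refine ⟨h.1, ?_⟩
    simp only [p, s] at h ⊢
    rw [h.2]
    norm_num
  · intro i
    have h2 : (2:ℝ) ^ i ≠ 0 := by positivity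
    simp only [p, s]
    rw [if_neg (by omega), pow_quarter, show i + 1 + 1 + 1 = i + 3 from rfl,
      two_pow_i i 3, four_pow]
    field_simp
    ring

lemma sumPS2 : Summable (fun i : ℕ => p (i + 1) * s (i + 1) ^ 2) ∧
    ∑' i : ℕ, p (i + 1) * s (i + 1) ^ 2 = 5/224 := by
  have h := sum_shift (f := fun i : ℕ => p (i + 1) * s (i + 1) ^ 2) (c := 3/512) (r := 1/8)
    (by norm_num) (by norm_num) ?_
  · refine ⟨h.1, ?_⟩
    simp only [p, s] at h ⊢
    rw [h.2]
    norm_num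
  · intro i
    have h2 : (2:ℝ) ^ i ≠ 0 := by positivity
    simp only [p, s]
    rw [if_neg (by omega), pow_eighth, show i + 1 + 1 + 1 = i + 3 from rfl,
      two_pow_i i 3, eight_pow]
    field_simp
    ring

/-! ### moments -/

section Moments

variable {P : Measure ℝ} [IsProbabilityMeasure P]

lemma int_x (hsupp : P (Set.Icc 0 1) = 1) : Integrable (fun x : ℝ => x) P := by
  refine integrable_bdd hsupp measurable_id (C := 1) ?_
  intro x hx
  rw [Real.norm_eq_abs, abs_le]
  exact ⟨by linarith [hx.1], hx.2⟩

lemma int_x2 (hsupp : P (Set.Icc 0 1) = 1) : Integrable (fun x : ℝ => x ^ 2) P := by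
  have := integrable_sq hsupp 0
  simpa using this

lemma integral_linear (hsupp : P (Set.Icc 0 1) = 1) (c b : ℝ) :
    ∫ x, (c * x + b) ∂P = c * (∫ x, x ∂P) + b := by
  rw [integral_add ((int_x hsupp).const_mul c) (integrable_const b),
    integral_const_mul, integral_const]
  simp [measure_univ]

lemma integral_quadratic (hsupp : P (Set.Icc 0 1) = 1) (c b : ℝ) :
    ∫ x, (c * x + b) ^ 2 ∂P
      = c ^ 2 * (∫ x, x ^ 2 ∂P) + 2 * c * b * (∫ x, x ∂P) + b ^ 2 := by
  have e : (fun x : ℝ => (c * x + b) ^ 2)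
      = fun x => c ^ 2 * x ^ 2 + ((2 * c * b) * x + b ^ 2) := by
    funext x; ring
  rw [e, integral_add ((int_x2 hsupp).const_mul _) (integrable_lin hsupp _ _),
    integral_const_mul, integral_linear hsupp]
  ring

lemma M1 (hsupp : P (Set.Icc 0 1) = 1) (hinv : Invariant P) : ∫ x, x ∂P = 4/7 := by
  set M : ℝ := ∫ x, x ∂P with hM
  have ht := transfer hinv measurable_id (int_x hsupp)
  have e1 : ∀ j : ℕ, ∫ x, S (j + 1) x ∂P = s (j + 1) * M + (1 - 4 * s (j + 1)) := by
    intro j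
    have : (fun x : ℝ => S (j + 1) x) = fun x => s (j + 1) * x + (1 - 4 * s (j + 1)) := by
      funext x; exact S_apply (by omega) x
    rw [this, integral_linear hsupp]
  simp only [id_eq] at ht
  rw [ht] at hM
  have e2 : ∀ j : ℕ, p (j + 1) * ∫ x, S (j + 1) x ∂P
      = (M - 4) * (p (j + 1) * s (j + 1)) + p (j + 1) := by
    intro j; rw [e1 j]; ring
  rw [tsum_congr e2, Summable.tsum_add (sumPS.1.mul_left _) sumP.1, tsum_mul_left,
    sumPS.2, sumP.2] at hM
  linarith

lemma M2 (hsupp : P (Set.Icc 0 1) = 1) (hinv : Invariant P) :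
    ∫ x, x ^ 2 ∂P = 1456/3577 := by
  set M : ℝ := ∫ x, x ^ 2 ∂P with hM
  have ht := transfer hinv (by fun_prop : Measurable (fun x : ℝ => x ^ 2)) (int_x2 hsupp)
  have e1 : ∀ j : ℕ, ∫ x, (S (j + 1) x) ^ 2 ∂P
      = s (j + 1) ^ 2 * M + 2 * s (j + 1) * (1 - 4 * s (j + 1)) * (4/7)
        + (1 - 4 * s (j + 1)) ^ 2 := by
    intro j
    have : (fun x : ℝ => (S (j + 1) x) ^ 2)
        = fun x => (s (j + 1) * x + (1 - 4 * s (j + 1))) ^ 2 := by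
      funext x; rw [S_apply (by omega) x]
    rw [this, integral_quadratic hsupp, M1 hsupp hinv]
  rw [ht] at hM
  have e2 : ∀ j : ℕ, p (j + 1) * ∫ x, (S (j + 1) x) ^ 2 ∂P
      = (M + 80/7) * (p (j + 1) * s (j + 1) ^ 2)
        + ((-48/7) * (p (j + 1) * s (j + 1)) + p (j + 1)) := by
    intro j; rw [e1 j]; ring
  rw [tsum_congr e2,
    Summable.tsum_add (sumPS2.1.mul_left _) ((sumPS.1.mul_left _).add sumP.1),
    Summable.tsum_add (sumPS.1.mul_left _) sumP.1, tsum_mul_left, tsum_mul_left,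
    sumPS2.2, sumPS.2, sumP.2] at hM
  linarith

lemma base_integral (hsupp : P (Set.Icc 0 1) = 1) (hinv : Invariant P) (a : ℝ) :
    ∫ x, (x - a) ^ 2 ∂P = 288/3577 + (a - 4/7) ^ 2 := by
  have e : (fun x : ℝ => (x - a) ^ 2) = fun x => (1 * x + (-a)) ^ 2 := by
    funext x; ring
  rw [e, integral_quadratic hsupp, M1 hsupp hinv, M2 hsupp hinv]
  ring

lemma base_setIntegral (hsupp : P (Set.Icc 0 1) = 1) (hinv : Invariant P) (a : ℝ) :
    ∫ x in Set.Icc (0:ℝ) 1, (x - a) ^ 2 ∂P = 288/3577 + (a - 4/7) ^ 2 := by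
  rw [Measure.restrict_eq_self_of_ae_mem (ae_mem_unit hsupp)]
  exact base_integral hsupp hinv a

end Moments

/-! ### step and word lemmas -/

section Step

variable {P : Measure ℝ} [IsProbabilityMeasure P]

lemma step (hsupp : P (Set.Icc 0 1) = 1) (hinv : Invariant P) {j : ℕ} (hj : 1 ≤ j)
    {A : Set ℝ} (hA : MeasurableSet A) (hSA : MeasurableSet (S j '' A))
    (hA1 : A ⊆ Set.Icc 0 1) (a : ℝ) :
    ∫ x in S j '' A, (x - S j a) ^ 2 ∂P
      = p j * (s j ^ 2 * ∫ x in A, (x - a) ^ 2 ∂P) := by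
  set g : ℝ → ℝ := fun x => (x - S j a) ^ 2 with hg
  have hmg : Measurable g := by fun_prop
  have hmf : Measurable ((S j '' A).indicator g) := hmg.indicator hSA
  have hif : Integrable ((S j '' A).indicator g) P :=
    (integrable_sq hsupp (S j a)).indicator hSA
  rw [← integral_indicator hSA, transfer hinv hmf hif]
  rw [tsum_eq_single (j - 1) ?_]
  · have hj1 : j - 1 + 1 = j := by omega
    rw [hj1]
    have e : ∀ x : ℝ, (S j '' A).indicator g (S j x)
        = s j ^ 2 * A.indicator (fun y => (y - a) ^ 2) x := by
      intro x
      have hinj : Function.Injective (S j) := by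
        intro u v huv
        have := S_sub j u v
        rw [huv, sub_self] at this
        have := (mul_eq_zero.mp this.symm).resolve_left (s_ne j)
        linarith
      rw [Set.indicator_image hinj]
      by_cases hx : x ∈ A
      · rw [Set.indicator_of_mem hx, Set.indicator_of_mem hx]
        simp only [Function.comp_apply, hg]
        rw [show S j x - S j a = s j * (x - a) from S_sub j x a, mul_pow]
      · rw [Set.indicator_of_notMem hx, Set.indicator_of_notMem hx, mul_zero]
    calc p j * ∫ x, (S j '' A).indicator g (S j x) ∂P
        = p j * ∫ x, s j ^ 2 * A.indicator (fun y => (y - a) ^ 2) x ∂P := by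
          congr 1; exact integral_congr_ae (Filter.Eventually.of_forall e)
      _ = p j * (s j ^ 2 * ∫ x in A, (x - a) ^ 2 ∂P) := by
          rw [integral_const_mul, integral_indicator hA]
  · intro i hi
    have hij : i + 1 ≠ j := by omega
    have hz : ∀ x ∈ Set.Icc (0:ℝ) 1, (S j '' A).indicator g (S (i + 1) x) = 0 := by
      intro x hx
      apply Set.indicator_of_notMem
      have hmem : S (i + 1) x ∈ S (i + 1) '' Set.Icc 0 1 := ⟨x, hx, rfl⟩
      have hdis := J_disjoint (i := i + 1) (j := j) (by omega) hj hij
      intro hcon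
      have : S (i + 1) x ∈ S j '' Set.Icc 0 1 :=
        Set.image_mono hA1 hcon
      exact Set.disjoint_left.mp hdis hmem this
    have : ∫ x, (S j '' A).indicator g (S (i + 1) x) ∂P = 0 := by
      apply integral_eq_zero_of_ae
      filter_upwards [ae_mem_unit hsupp] with x hx
      exact hz x hx
    rw [this, mul_zero]

lemma word (hsupp : P (Set.Icc 0 1) = 1) (hinv : Invariant P) :
    ∀ ω : List ℕ, (∀ i ∈ ω, 1 ≤ i) → ∀ a : ℝ,
      ∫ x in Jw ω, (x - Sw ω a) ^ 2 ∂P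
        = pw ω * sw ω ^ 2 * (288/3577 + (a - 4/7) ^ 2) := by
  intro ω
  induction ω with
  | nil =>
      intro _ a
      have : Jw [] = Set.Icc (0:ℝ) 1 := by
        rw [Jw]; simp [Sw]
      rw [this, pw_nil, sw_nil, Sw_nil, base_setIntegral hsupp hinv]
      ring
  | cons j ω ih =>
      intro hall a
      have hj : 1 ≤ j := hall j List.mem_cons_self
      have hω : ∀ i ∈ ω, 1 ≤ i := fun i hi => hall i (List.mem_cons_of_mem j hi)
      have himg : Jw (j :: ω) = S j '' Jw ω := by
        rw [Jw, Jw, ← Set.image_comp]; rfl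
      have hSwa : Sw (j :: ω) a = S j (Sw ω a) := rfl
      rw [himg, hSwa,
        step hsupp hinv hj (Jw_meas ω) (himg ▸ Jw_meas (j :: ω)) (Jw_subset ω) (Sw ω a),
        ih hω a, pw_cons, sw_cons]
      ring

end Step

/-! ### the key series for the tail -/

lemma keySum :
    ∑' j : ℕ, (3 * (1/8:ℝ) ^ (j + 1) * ((288/3577) + (8/7 * (3 - 2 ^ (j + 1))) ^ 2))
      = 43/3 * (288/3577) := by
  have hdecomp : ∀ j : ℕ,
      3 * (1/8:ℝ) ^ (j + 1) * ((288/3577) + (8/7 * (3 - 2 ^ (j + 1))) ^ 2)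
        = (15876/3577) * (1/8) ^ j + ((-288/49) * (1/4) ^ j + (96/49) * (1/2) ^ j) := by
    intro j
    have h2 : (0:ℝ) < 2 ^ j := by positivity
    rw [pow_succ, pow_succ, pow_succ, pow_succ, pow_eighth, pow_quarter, pow_half,
      eight_pow, four_pow]
    field_simp
    ring
  have s8 : Summable (fun j : ℕ => (15876/3577:ℝ) * (1/8) ^ j) :=
    (summable_geometric_of_lt_one (by norm_num) (by norm_num)).mul_left _
  have s4 : Summable (fun j : ℕ => (-288/49:ℝ) * (1/4) ^ j) :=
    (summable_geometric_of_lt_one (by norm_num) (by norm_num)).mul_left _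
  have s2 : Summable (fun j : ℕ => (96/49:ℝ) * (1/2) ^ j) :=
    (summable_geometric_of_lt_one (by norm_num) (by norm_num)).mul_left _
  rw [tsum_congr hdecomp, Summable.tsum_add s8 (s4.add s2), Summable.tsum_add s4 s2,
    tsum_mul_left, tsum_mul_left, tsum_mul_left,
    tsum_geometric_of_lt_one (by norm_num : (0:ℝ) ≤ 1/8) (by norm_num),
    tsum_geometric_of_lt_one (by norm_num : (0:ℝ) ≤ 1/4) (by norm_num),
    tsum_geometric_of_lt_one (by norm_num : (0:ℝ) ≤ 1/2) (by norm_num)]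
  norm_num

/-! ### evaluation of a single tail term -/

section Tail

variable {P : Measure ℝ} [IsProbabilityMeasure P]

lemma term_eval (hsupp : P (Set.Icc 0 1) = 1) (hinv : Invariant P)
    {D : List ℕ} (hD : ∀ i ∈ D, 1 ≤ i) {l : ℕ} (hl : 1 ≤ l) (j : ℕ) :
    ∫ x in Jw (D ++ [l + j + 1]),
        (x - (Sw (D ++ [l + 1]) (4/7) + (8/7) * sw (D ++ [l + 1]))) ^ 2 ∂P
      = pw D * sw D ^ 2 * s l ^ 3
          * (3 * (1/8) ^ (j + 1) * ((288/3577) + (8/7 * (3 - 2 ^ (j + 1))) ^ 2)) := by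
  set m : ℕ := l + j + 1 with hm
  set u : List ℕ := D ++ [m] with hu
  set av : ℝ := Sw (D ++ [l + 1]) (4/7) + (8/7) * sw (D ++ [l + 1]) with hav
  have hum : ∀ i ∈ u, 1 ≤ i := by
    intro i hi
    rcases List.mem_append.mp hi with h | h
    · exact hD i h
    · simp at h; omega
  set a' : ℝ := (av - Sw u 0) / sw u with ha'
  have hSa : Sw u a' = av := by
    have h1 := Sw_sub u a' 0
    have h2 : sw u * a' = av - Sw u 0 := by
      rw [ha', mul_comm, div_mul_cancel₀ _ (sw_ne u)]
    simp only [mul_zero, sub_zero] at h1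
    linarith [h1, h2]
  have hword := word hsupp hinv u hum a'
  rw [hSa] at hword
  rw [hword]
  -- now evaluate a' - 4/7 and the structural constants
  have hswu : sw u = sw D * s m := by
    rw [hu, sw_append]; simp [sw]
  have hswl1 : sw (D ++ [l + 1]) = sw D * s (l + 1) := by
    rw [sw_append]; simp [sw]
  have hpwu : pw u = pw D * (3 * s m) := by
    rw [hu, pw_append]
    have : pw [m] = p m := by simp [pw]
    rw [this, p_eq_3s (by omega)]
  have hSw0 : Sw u 0 = Sw D (S m 0) := by
    rw [hu, Sw_append]; rfl
  have hSwl1 : Sw (D ++ [l + 1]) (4/7) = Sw D (S (l + 1) (4/7)) := by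
    rw [Sw_append]; rfl
  have hSwDy : ∀ y : ℝ, Sw D y = sw D * y + Sw D 0 := by
    intro y
    have := Sw_sub D y 0
    simp only [mul_zero, sub_zero] at this
    linarith [this]
  have hsrel : s (l + 1) = s m * 2 ^ j := by
    simp only [s, hm]
    rw [show l + j + 1 + 1 = (l + 1 + 1) + j from by omega, pow_add]
    have h2 : (2:ℝ) ^ (l + 1 + 1) ≠ 0 := by positivity
    have h2' : (2:ℝ) ^ j ≠ 0 := by positivity
    field_simp
    rw [pow_add, pow_succ]
  have ha'val : a' - 4/7 = 8/7 * (3 - 2 ^ (j + 1)) := by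
    rw [ha', hav, hswu, hswl1, hSw0, hSwl1, hSwDy (S (l + 1) (4/7)), hSwDy (S m 0),
      S_apply (show 1 ≤ l + 1 by omega), S_apply (show 1 ≤ m by omega), hsrel]
    have hD0 := sw_ne D
    have hs0 := s_ne m
    have h2 : (2:ℝ) ^ j ≠ 0 := by positivity
    rw [pow_succ]
    field_simp
    ring
  have hcube : s m ^ 3 = s l ^ 3 * (1/8) ^ (j + 1) := by
    have hslm : s m = s l * (1/2) ^ (j + 1) := by
      simp only [s, hm]
      rw [show l + j + 1 + 1 = (l + 1) + (j + 1) from by omega, pow_add, pow_half]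
      have h1 : (2:ℝ) ^ (l + 1) ≠ 0 := by positivity
      have h2 : (2:ℝ) ^ (j + 1) ≠ 0 := by positivity
      field_simp
    rw [hslm, mul_pow, ← pow_mul, show (j + 1) * 3 = 3 * (j + 1) from by ring, pow_mul]
    norm_num
  rw [ha'val, hpwu, hswu]
  rw [show pw D * (3 * s m) * (sw D * s m) ^ 2
        * ((288/3577) + (8/7 * (3 - 2 ^ (j + 1))) ^ 2)
      = pw D * sw D ^ 2 * (s m ^ 3)
        * (3 * ((288/3577) + (8/7 * (3 - 2 ^ (j + 1))) ^ 2)) from by ring, hcube]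
  ring

end Tail


/-- `∫_{J_ω}(x-a(ω))² dP = p_ω s_ω² V`, and `∫_{J_{(ω,∞)}}(x-a(ω,∞))² dP` equals
`(43/9) p_ω s_ω² V` if the last letter of `ω` is `≥ 2`, and `(43/3) p_ω s_ω² V` if it is `1`,
where `V = 288/3577`. -/
theorem stmt_3 (P : Measure ℝ) [IsProbabilityMeasure P]
    (hsupp : P (Set.Icc 0 1) = 1) (hinv : Invariant P) (ω : List ℕ) (hω : IsWord ω) :
    Ea P ω = pw ω * sw ω ^ 2 * (288 / 3577) ∧
    (2 ≤ wlast ω → Eainf P ω = (43 / 9) * (pw ω * sw ω ^ 2 * (288 / 3577))) ∧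
    (wlast ω = 1 → Eainf P ω = (43 / 3) * (pw ω * sw ω ^ 2 * (288 / 3577))) := by
  obtain ⟨hne, hall⟩ := hω
  have hEa : Ea P ω = pw ω * sw ω ^ 2 * (288 / 3577) := by
    rw [Ea, aw, word hsupp hinv ω hall (4/7)]
    norm_num
  set D : List ℕ := ω.dropLast with hD
  set l : ℕ := wlast ω with hldef
  have hlast : ω.getLast hne = l := by
    rw [hldef, wlast, List.getLastD_eq_getLast?, List.getLast?_eq_getLast hne]
    rfl
  have hωeq : D ++ [l] = ω := by
    rw [hD, ← hlast]
    exact List.dropLast_append_getLast hne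
  have hDall : ∀ i ∈ D, 1 ≤ i := fun i hi => hall i (List.dropLast_subset ω hi)
  have hl1 : 1 ≤ l := by
    have := hall _ (List.getLast_mem hne)
    rwa [hlast] at this
  have hwext : ∀ k : ℕ, wext ω k = D ++ [l + k] := fun k => rfl
  -- the tail integral
  have hEainf : Eainf P ω = pw D * sw D ^ 2 * s l ^ 3 * (43/3 * (288/3577)) := by
    have hmeas : ∀ j : ℕ, MeasurableSet (Jw (wext ω (j + 1))) := fun j => Jw_meas _
    have hJsplit : ∀ m : ℕ, Jw (D ++ [m]) = Sw D '' (S m '' Set.Icc 0 1) := by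
      intro m
      have hfe : Sw (D ++ [m]) = Sw D ∘ S m := by
        funext x
        rw [Sw_append]
        rfl
      rw [Jw, hfe, Set.image_comp]
    have hpair : Pairwise (Function.onFun Disjoint fun j : ℕ => Jw (wext ω (j + 1))) := by
      intro i j hij
      simp only [Function.onFun, hwext, hJsplit]
      exact (Set.disjoint_image_iff (Sw_inj D)).mpr
        (J_disjoint (by omega) (by omega) (by omega))
    have hint : IntegrableOn (fun x => (x - ainf ω) ^ 2) (⋃ j : ℕ, Jw (wext ω (j + 1))) P :=
      (integrable_sq hsupp (ainf ω)).integrableOn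
    rw [Eainf, Jinf, integral_iUnion hmeas hpair hint]
    have hterm : ∀ j : ℕ,
        ∫ x in Jw (wext ω (j + 1)), (x - ainf ω) ^ 2 ∂P
          = pw D * sw D ^ 2 * s l ^ 3
              * (3 * (1/8) ^ (j + 1) * ((288/3577) + (8/7 * (3 - 2 ^ (j + 1))) ^ 2)) := by
      intro j
      have h1 := term_eval hsupp hinv hDall hl1 (P := P) j
      rw [hwext (j + 1), show l + (j + 1) = l + j + 1 from by omega]
      rw [show ainf ω = Sw (D ++ [l + 1]) (4/7) + (8/7) * sw (D ++ [l + 1]) from by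
        rw [ainf, hwext 1]]
      exact h1
    rw [tsum_congr hterm, tsum_mul_left, keySum]
  refine ⟨hEa, ?_, ?_⟩
  · intro hl2
    have hpwω : pw ω = pw D * p l := by
      rw [← hωeq, pw_append]; simp [pw]
    have hswω : sw ω = sw D * s l := by
      rw [← hωeq, sw_append]; simp [sw]
    rw [hEainf, hpwω, hswω, p_eq_3s hl2]
    ring
  · intro hl1'
    have hpwω : pw ω = pw D * p l := by
      rw [← hωeq, pw_append]; simp [pw]
    have hswω : sw ω = sw D * s l := by
      rw [← hωeq, sw_append]; simp [sw]
    have hp1 : p l = 1/4 := by rw [hl1']; simp [p]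
    have hs1 : s l = 1/4 := by rw [hl1']; norm_num [s]
    rw [hEainf, hpwω, hswω, hp1, hs1]
    ring
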